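/- Let 3 ≤ k ≤ n, m ∈ ℕ with m ≥ 1, and define v : ℝⁿ → ℝ by v(x) = ( ∏_{i=1}^{k−1} sin²(m x_i) ) · ( ∏_{i=k}^{n} x_i ). Then for every j ∈ {k, …, n} and every x ∈ ℝⁿ, writing γ = (1,…,k−1), M_{γ+j}^{γ+j}(D²v) = (−1)^{k−1} 2^k m^{2k−2} ( ∏_{i ∈ {k,…,n}, i ≠ j} x_i )^k ( ∏_{i=1}^{k−1} sin²(m x_i) )^{k−1} x_j^{k−2} ( ∑_{i=1}^{k−1} cos²(m x_i) ). -/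

import Mathlib

open MeasureTheory Filter Topology Finset

noncomputable section

/-- Euclidean `n`-space. -/
abbrev Eu (n : ℕ) : Type := EuclideanSpace ℝ (Fin n)

/-- The partial derivative `∂ᵢ u`. -/
noncomputable def pd {n : ℕ} (i : Fin n) (u : Eu n → ℝ) : Eu n → ℝ :=
  fun x => fderiv ℝ u x (EuclideanSpace.single i 1)

/-- The second partial derivative `∂ᵢ∂ⱼ u`. -/
noncomputable def pd2 {n : ℕ} (i j : Fin n) (u : Eu n → ℝ) : Eu n → ℝ :=
  pd i (pd j u)

/-- The Hessian matrix `D²u` of `u`. -/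
noncomputable def hess {n : ℕ} (u : Eu n → ℝ) (x : Eu n) : Matrix (Fin n) (Fin n) ℝ :=
  Matrix.of fun i j => pd2 i j u x

/-- The minor `M_r^c(A)`: the determinant of the submatrix of `A` with rows `r` and
columns `c` (both taken in increasing order); `0` if the cardinalities differ. -/
noncomputable def minor {N : ℕ} (A : Matrix (Fin N) (Fin N) ℝ) (r c : Finset (Fin N)) : ℝ :=
  if h : c.card = r.card then
    (Matrix.of fun i j : Fin r.card =>
      A ((r.orderIsoOfFin rfl i : Fin N)) ((c.orderIsoOfFin h j : Fin N))).det
  else 0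

/-- The `k`-Hessian `F_k[u] = ∑_{α ∈ I(k,n)} M_α^α(D²u)`. -/
noncomputable def fkH {n : ℕ} (k : ℕ) (u : Eu n → ℝ) (x : Eu n) : ℝ :=
  ∑ s ∈ Finset.univ.filter (fun s : Finset (Fin n) => s.card = k), minor (hess u x) s s

/-- The multi-index `γ = (1,…,k-1)` (the first `k-1` coordinates, 0-based). -/
def gam (n k : ℕ) : Finset (Fin n) := Finset.univ.filter fun i => (i : ℕ) < k - 1

/-- The complementary coordinates `(k,…,n)` (0-based: indices `≥ k-1`). -/
def delt (n k : ℕ) : Finset (Fin n) := Finset.univ.filter fun i => k - 1 ≤ (i : ℕ)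

/-! ### Auxiliary material -/

/-- base family of one-variable functions -/
noncomputable def gfun (k m : ℕ) {n : ℕ} (l : Fin n) : ℝ → ℝ :=
  fun t => if (l : ℕ) < k - 1 then Real.sin (m * t) ^ 2 else t
noncomputable def g1fun (k m : ℕ) {n : ℕ} (l : Fin n) : ℝ → ℝ :=
  fun t => if (l : ℕ) < k - 1 then 2 * m * Real.sin (m * t) * Real.cos (m * t) else 1
noncomputable def g2fun (k m : ℕ) {n : ℕ} (l : Fin n) : ℝ → ℝ :=
  fun t => if (l : ℕ) < k - 1 then
    2 * (m : ℝ) ^ 2 * (Real.cos (m * t) ^ 2 - Real.sin (m * t) ^ 2) else 0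

lemma hderiv_nat_mul (m : ℕ) (t : ℝ) : HasDerivAt (fun t : ℝ => (m : ℝ) * t) m t := by
  simpa using (hasDerivAt_id t).const_mul (m : ℝ)

lemma hasDerivAt_gfun (k m : ℕ) {n : ℕ} (l : Fin n) (t : ℝ) :
    HasDerivAt (gfun k m l) (g1fun k m l t) t := by
  by_cases h : (l : ℕ) < k - 1
  · have hfun : gfun k m l = fun t : ℝ => Real.sin (m * t) ^ 2 := by
      funext s; simp [gfun, if_pos h]
    rw [hfun]
    simp only [g1fun, if_pos h]
    have hs : HasDerivAt (fun t : ℝ => Real.sin (m * t)) (Real.cos (m * t) * m) t :=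
      (Real.hasDerivAt_sin ((m : ℝ) * t)).comp t (hderiv_nat_mul m t)
    have h2 := hs.pow 2
    refine h2.congr_deriv ?_
    push_cast
    ring
  · have hfun : gfun k m l = fun t : ℝ => t := by
      funext s; simp [gfun, if_neg h]
    rw [hfun]
    simp only [g1fun, if_neg h]
    exact hasDerivAt_id t

lemma hasDerivAt_g1fun (k m : ℕ) {n : ℕ} (l : Fin n) (t : ℝ) :
    HasDerivAt (g1fun k m l) (g2fun k m l t) t := by
  by_cases h : (l : ℕ) < k - 1
  · have hfun : g1fun k m l
        = fun t : ℝ => 2 * m * Real.sin (m * t) * Real.cos (m * t) := by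
      funext s; simp [g1fun, if_pos h]
    rw [hfun]
    simp only [g2fun, if_pos h]
    have hs : HasDerivAt (fun t : ℝ => Real.sin (m * t)) (Real.cos (m * t) * m) t :=
      (Real.hasDerivAt_sin ((m : ℝ) * t)).comp t (hderiv_nat_mul m t)
    have hc : HasDerivAt (fun t : ℝ => Real.cos (m * t)) (-Real.sin (m * t) * m) t :=
      (Real.hasDerivAt_cos ((m : ℝ) * t)).comp t (hderiv_nat_mul m t)
    have h2 := (hs.const_mul (2 * (m : ℝ))).mul hc
    refine h2.congr_deriv ?_
    ring
  · have hfun : g1fun k m l = fun _ : ℝ => (1:ℝ) := by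
      funext s; simp [g1fun, if_neg h]
    rw [hfun]
    simp only [g2fun, if_neg h]
    exact hasDerivAt_const t (1:ℝ)

lemma pd_prod {n : ℕ} (g g' : Fin n → ℝ → ℝ)
    (hg : ∀ l t, HasDerivAt (g l) (g' l t) t) (i : Fin n) (x : Eu n) :
    pd i (fun y => ∏ l, g l (y l)) x = ∏ l, Function.update g i (g' i) l (x l) := by
  have hco : ∀ (l : Fin n), HasFDerivAt (fun y : Eu n => g l (y l))
      ((g' l (x l)) • (EuclideanSpace.proj l : Eu n →L[ℝ] ℝ)) x := by
    intro l
    have h1 : HasFDerivAt (fun y : Eu n => y l) (EuclideanSpace.proj l : Eu n →L[ℝ] ℝ) x :=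
      (EuclideanSpace.proj (𝕜 := ℝ) l).hasFDerivAt
    exact (hg l (x l)).comp_hasFDerivAt x h1
  have hP := HasFDerivAt.finset_prod (u := Finset.univ)
    (g := fun l (y : Eu n) => g l (y l)) (fun l _ => hco l)
  rw [pd, hP.fderiv]
  simp only [ContinuousLinearMap.coe_sum', Finset.sum_apply, ContinuousLinearMap.coe_smul',
    Pi.smul_apply, smul_eq_mul]
  have hpr : ∀ l : Fin n, (EuclideanSpace.proj l : Eu n →L[ℝ] ℝ) (EuclideanSpace.single i 1)
      = if l = i then (1:ℝ) else 0 := fun l => by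
    simp [EuclideanSpace.proj, EuclideanSpace.single_apply]
  simp only [hpr]
  rw [Finset.sum_eq_single i]
  · rw [← Finset.mul_prod_erase univ (fun l => Function.update g i (g' i) l (x l))
      (Finset.mem_univ i)]
    simp only [Function.update_self]
    have hpe : ∏ b ∈ univ.erase i, Function.update g i (g' i) b (x b)
        = ∏ b ∈ univ.erase i, g b (x b) :=
      Finset.prod_congr rfl fun b hb => by
        rw [Function.update_of_ne (Finset.mem_erase.1 hb).1]
    rw [hpe]
    rw [if_true]
    ring
  · intro b _ hb
    simp [hb]
  · exact fun h => absurd (Finset.mem_univ i) h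

lemma double_erase_prod {α : Type*} [DecidableEq α] (s : Finset α) (f : α → ℝ) :
    ∏ i ∈ s, ∏ l ∈ s.erase i, f l = (∏ l ∈ s, f l) ^ (s.card - 1) := by
  rw [Finset.prod_comm' (s' := fun y => s.erase y) (t' := s)
    (fun x y => by simp [Finset.mem_erase]; tauto)]
  rw [Finset.prod_congr rfl fun y hy => Finset.prod_const (f y)]
  rw [Finset.prod_congr rfl fun y hy => by rw [Finset.card_erase_of_mem hy]]
  exact Finset.prod_pow s (s.card - 1) f

lemma erase_erase_comm {α : Type*} [DecidableEq α] (s : Finset α) (a b : α) :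
    (s.erase a).erase b = (s.erase b).erase a := by
  ext l; simp only [Finset.mem_erase]; tauto

lemma minor_eq {N : ℕ} (A : Matrix (Fin N) (Fin N) ℝ) (S : Finset (Fin N)) {k : ℕ}
    (h : S.card = k) :
    minor A S S = (Matrix.of fun p q : Fin k =>
      A (S.orderEmbOfFin h p) (S.orderEmbOfFin h q)).det := by
  subst h
  rw [minor, dif_pos rfl]
  congr 1

theorem stmt13 (n k m : ℕ) (hk : 3 ≤ k) (hkn : k ≤ n) (hm : 1 ≤ m)
    (j : Fin n) (hj : k - 1 ≤ (j : ℕ))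
    (v : Eu n → ℝ)
    (hv : ∀ y : Eu n, v y =
      (∏ i ∈ gam n k, Real.sin (m * y i) ^ 2) * ∏ i ∈ delt n k, y i) :
    ∀ x : Eu n,
      minor (hess v x) (gam n k ∪ {j}) (gam n k ∪ {j}) =
        (-1 : ℝ) ^ (k - 1) * 2 ^ k * (m : ℝ) ^ (2 * k - 2)
          * (∏ i ∈ (delt n k).erase j, x i) ^ k
          * (∏ i ∈ gam n k, Real.sin (m * x i) ^ 2) ^ (k - 1)
          * (x j) ^ (k - 2)
          * ∑ i ∈ gam n k, Real.cos (m * x i) ^ 2 := by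
  obtain ⟨k2, rfl⟩ : ∃ k2, k = k2 + 2 := ⟨k - 2, by omega⟩
  intro x
  classical
  have hjv : k2 + 1 ≤ (j : ℕ) := by simpa using hj
  have hn : k2 + 2 ≤ n := hkn
  have hjn : (j : ℕ) < n := j.isLt
  have memγ : ∀ l : Fin n, l ∈ gam n (k2+2) ↔ (l : ℕ) < k2 + 1 := by
    intro l; simp [gam]
  have memδ : ∀ l : Fin n, l ∈ delt n (k2+2) ↔ k2 + 1 ≤ (l : ℕ) := by
    intro l; simp [delt]
  have hjγ : j ∉ gam n (k2+2) := by rw [memγ]; omega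
  have hjδ : j ∈ delt n (k2+2) := (memδ j).2 hjv
  have hcardγ : (gam n (k2+2)).card = k2 + 1 := by
    have himg : gam n (k2+2)
        = Finset.image (fun q : Fin (k2+1) => (⟨q.val, by omega⟩ : Fin n)) univ := by
      ext l
      simp only [memγ, Finset.mem_image, Finset.mem_univ, true_and]
      constructor
      · intro hl; exact ⟨⟨l.val, hl⟩, by apply Fin.ext; rfl⟩
      · rintro ⟨q, rfl⟩; exact q.isLt
    rw [himg, Finset.card_image_of_injective _
      (fun a b hab => by simpa [Fin.ext_iff] using hab)]
    simp
  have hS : (gam n (k2+2) ∪ {j}).card = k2 + 2 := by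
    rw [Finset.union_comm, ← Finset.insert_eq, Finset.card_insert_of_notMem hjγ, hcardγ]
  -- the enumeration of γ ∪ {j}
  set φ : Fin (k2+2) → Fin n :=
    fun p => if h : (p : ℕ) < k2 + 1 then ⟨(p : ℕ), by omega⟩ else j with hφdef
  have hφvlt : ∀ p : Fin (k2+2), (p : ℕ) < k2 + 1 → ((φ p : Fin n) : ℕ) = (p : ℕ) := by
    intro p hp; rw [hφdef]; simp only [dif_pos hp]
  have hφge : ∀ p : Fin (k2+2), ¬((p : ℕ) < k2 + 1) → φ p = j := by
    intro p hp; rw [hφdef]; simp only [dif_neg hp]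
  have hφmono : StrictMono φ := by
    intro p q hpq
    have hpq' : (p : ℕ) < (q : ℕ) := hpq
    have hpk := p.isLt
    have hqk := q.isLt
    rw [Fin.lt_def]
    by_cases hp : (p : ℕ) < k2 + 1
    · by_cases hq : (q : ℕ) < k2 + 1
      · rw [hφvlt p hp, hφvlt q hq]; exact hpq'
      · rw [hφvlt p hp, hφge q hq]; omega
    · by_cases hq : (q : ℕ) < k2 + 1
      · omega
      · omega
  have hφinj : Function.Injective φ := hφmono.injective
  have hφmem : ∀ p, φ p ∈ gam n (k2+2) ∪ {j} := by
    intro p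
    by_cases hp : (p : ℕ) < k2 + 1
    · exact Finset.mem_union_left _ ((memγ _).2 (by rw [hφvlt p hp]; exact hp))
    · rw [hφge p hp]; exact Finset.mem_union_right _ (Finset.mem_singleton_self j)
  have hminor : minor (hess v x) (gam n (k2+2) ∪ {j}) (gam n (k2+2) ∪ {j})
      = (Matrix.of fun p q : Fin (k2+2) => pd2 (φ p) (φ q) v x).det := by
    rw [minor_eq _ _ hS]
    have huniq := Finset.orderEmbOfFin_unique hS hφmem hφmono
    congr 1
    ext p q
    rw [Matrix.of_apply, Matrix.of_apply, ← congrFun huniq p, ← congrFun huniq q]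
    rfl
  -- shape of gfun
  have hgshape : ∀ (t : ℝ) (l : Fin n), gfun (k2+2) m l t
      = if (l : ℕ) < k2 + 1 then Real.sin (m * t) ^ 2 else t := by
    intro t l
    by_cases hl : (l : ℕ) < k2 + 1
    · simp only [gfun]
      rw [if_pos (show (l : ℕ) < k2 + 2 - 1 by omega), if_pos hl]
    · simp only [gfun]
      rw [if_neg (show ¬(l : ℕ) < k2 + 2 - 1 by omega), if_neg hl]
  have hg1γ : ∀ a : Fin n, (a : ℕ) < k2 + 1 → g1fun (k2+2) m a (x a)
      = 2 * m * Real.sin (m * x a) * Real.cos (m * x a) := by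
    intro a ha; simp only [g1fun]; rw [if_pos (show (a : ℕ) < k2 + 2 - 1 by omega)]
  have hg2γ : ∀ a : Fin n, (a : ℕ) < k2 + 1 → g2fun (k2+2) m a (x a)
      = 2 * (m:ℝ)^2 * (Real.cos (m * x a) ^ 2 - Real.sin (m * x a) ^ 2) := by
    intro a ha; simp only [g2fun]; rw [if_pos (show (a : ℕ) < k2 + 2 - 1 by omega)]
  have hg1j : g1fun (k2+2) m j (x j) = 1 := by
    simp only [g1fun]; rw [if_neg (show ¬(j : ℕ) < k2 + 2 - 1 by omega)]
  have hg2j : g2fun (k2+2) m j (x j) = 0 := by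
    simp only [g2fun]; rw [if_neg (show ¬(j : ℕ) < k2 + 2 - 1 by omega)]
  -- v as a full product
  have hγfil : gam n (k2+2) = univ.filter (fun l : Fin n => (l : ℕ) < k2 + 1) := by
    ext l; simp [gam]
  have hδfil : delt n (k2+2) = univ.filter (fun l : Fin n => ¬(l : ℕ) < k2 + 1) := by
    ext l; simp [delt]
  have hvfun : v = fun y => ∏ l, gfun (k2+2) m l (y l) := by
    funext y
    rw [hv y]
    have : ∀ l : Fin n, gfun (k2+2) m l (y l)
        = if (l : ℕ) < k2 + 1 then Real.sin (m * y l) ^ 2 else y l := fun l => hgshape (y l) l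
    simp only [this]
    rw [Finset.prod_ite (fun l : Fin n => Real.sin (m * y l) ^ 2) (fun l : Fin n => y l)]
    rw [hγfil, hδfil]
  have hsplit : ∀ t : Finset (Fin n), ∏ l ∈ t, gfun (k2+2) m l (x l)
      = (∏ l ∈ t.filter (fun l : Fin n => (l : ℕ) < k2 + 1), Real.sin (m * x l) ^ 2)
        * ∏ l ∈ t.filter (fun l : Fin n => ¬(l : ℕ) < k2 + 1), x l := by
    intro t
    have : ∀ l : Fin n, gfun (k2+2) m l (x l)
        = if (l : ℕ) < k2 + 1 then Real.sin (m * x l) ^ 2 else x l := fun l => hgshape (x l) l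
    simp only [this]
    exact Finset.prod_ite _ _
  -- second derivatives
  have hder0 : ∀ (l : Fin n) t, HasDerivAt (gfun (k2+2) m l) (g1fun (k2+2) m l t) t :=
    fun l t => hasDerivAt_gfun _ _ l t
  have hinner : ∀ b : Fin n, pd b v
      = fun y => ∏ l, Function.update (gfun (k2+2) m) b (g1fun (k2+2) m b) l (y l) := by
    intro b; funext y; rw [hvfun]; exact pd_prod _ _ hder0 b y
  have hupdder : ∀ (b l : Fin n) (t : ℝ),
      HasDerivAt (Function.update (gfun (k2+2) m) b (g1fun (k2+2) m b) l)
        (Function.update (g1fun (k2+2) m) b (g2fun (k2+2) m b) l t) t := by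
    intro b l t
    by_cases hl : l = b
    · subst hl; simp only [Function.update_self]; exact hasDerivAt_g1fun _ _ l t
    · simp only [Function.update_of_ne hl]; exact hder0 l t
  have hkey : ∀ a b : Fin n, pd2 a b v x
      = ∏ l, Function.update (Function.update (gfun (k2+2) m) b (g1fun (k2+2) m b)) a
          (Function.update (g1fun (k2+2) m) b (g2fun (k2+2) m b) a) l (x l) := by
    intro a b
    show pd a (pd b v) x = _
    rw [hinner b]
    exact pd_prod _ _ (hupdder b) a x
  have key_diag : ∀ a : Fin n, pd2 a a v x
      = g2fun (k2+2) m a (x a) * ∏ l ∈ univ.erase a, gfun (k2+2) m l (x l) := by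
    intro a
    rw [hkey a a, ← Finset.mul_prod_erase univ _ (Finset.mem_univ a)]
    congr 1
    · simp [Function.update_self]
    · apply Finset.prod_congr rfl
      intro l hl
      have hla : l ≠ a := (Finset.mem_erase.1 hl).1
      rw [Function.update_of_ne hla, Function.update_of_ne hla]
  have key_off : ∀ a b : Fin n, a ≠ b → pd2 a b v x
      = g1fun (k2+2) m a (x a) * (g1fun (k2+2) m b (x b)
        * ∏ l ∈ (univ.erase a).erase b, gfun (k2+2) m l (x l)) := by
    intro a b hab
    rw [hkey a b, ← Finset.mul_prod_erase univ _ (Finset.mem_univ a)]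
    congr 1
    · rw [Function.update_self, Function.update_of_ne hab]
    · rw [← Finset.mul_prod_erase (univ.erase a) _
        (Finset.mem_erase.2 ⟨Ne.symm hab, Finset.mem_univ b⟩)]
      congr 1
      · rw [Function.update_of_ne (Ne.symm hab), Function.update_self]
      · apply Finset.prod_congr rfl
        intro l hl
        have h1 : l ≠ b := (Finset.mem_erase.1 hl).1
        have h2 : l ≠ a := (Finset.mem_erase.1 (Finset.mem_erase.1 hl).2).1
        rw [Function.update_of_ne h2, Function.update_of_ne h1]
  -- filter identities
  have fγ1 : ∀ a : Fin n, (univ.erase a).filter (fun l : Fin n => (l : ℕ) < k2 + 1)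
      = (gam n (k2+2)).erase a := by
    intro a; ext l
    simp only [Finset.mem_filter, Finset.mem_erase, Finset.mem_univ, true_and, and_true,
      ne_eq, memγ, gam]
    tauto
  have fδ1 : ∀ a : Fin n, (a : ℕ) < k2 + 1 →
      (univ.erase a).filter (fun l : Fin n => ¬(l : ℕ) < k2 + 1) = delt n (k2+2) := by
    intro a ha; ext l
    simp only [Finset.mem_filter, Finset.mem_erase, Finset.mem_univ, true_and, memδ,
      and_true, Fin.ext_iff, not_lt]
    omega
  have fγ2 : ∀ a b : Fin n, ((univ.erase a).erase b).filter (fun l : Fin n => (l : ℕ) < k2 + 1)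
      = ((gam n (k2+2)).erase a).erase b := by
    intro a b; ext l
    simp only [Finset.mem_filter, Finset.mem_erase, Finset.mem_univ, true_and, and_true,
      ne_eq, memγ, gam]
    tauto
  have fδ2 : ∀ a b : Fin n, (a : ℕ) < k2 + 1 → (b : ℕ) < k2 + 1 →
      ((univ.erase b).erase a).filter (fun l : Fin n => ¬(l : ℕ) < k2 + 1) = delt n (k2+2) := by
    intro a b ha hb; ext l
    simp only [Finset.mem_filter, Finset.mem_erase, Finset.mem_univ, true_and, and_true,
      ne_eq, memδ, Fin.ext_iff, not_lt]
    omega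
  have fγ3 : ∀ a : Fin n, (a : ℕ) < k2 + 1 →
      ((univ.erase a).erase j).filter (fun l : Fin n => (l : ℕ) < k2 + 1)
      = (gam n (k2+2)).erase a := by
    intro a ha; ext l
    simp only [Finset.mem_filter, Finset.mem_erase, Finset.mem_univ, true_and, and_true,
      ne_eq, memγ, Fin.ext_iff]
    omega
  have fδ3 : ∀ a : Fin n, (a : ℕ) < k2 + 1 →
      ((univ.erase a).erase j).filter (fun l : Fin n => ¬(l : ℕ) < k2 + 1)
      = (delt n (k2+2)).erase j := by
    intro a ha; ext l
    simp only [Finset.mem_filter, Finset.mem_erase, Finset.mem_univ, true_and, and_true,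
      ne_eq, memδ, Fin.ext_iff, not_lt]
    omega
  have hQ : ∏ l ∈ delt n (k2+2), x l = x j * ∏ l ∈ (delt n (k2+2)).erase j, x l :=
    (Finset.mul_prod_erase _ _ hjδ).symm
  -- the scaled matrix
  set rv : Fin (k2+2) → ℝ := fun p =>
    if (p:ℕ) < k2+1 then ∏ l ∈ (gam n (k2+2)).erase (φ p), Real.sin (m * x l)
    else ∏ l ∈ gam n (k2+2), Real.sin (m * x l) with hrv
  set NM : Matrix (Fin (k2+2)) (Fin (k2+2)) ℝ := Matrix.of (fun p q : Fin (k2+2) =>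
    if (p:ℕ) < k2+1 then
      (if (q:ℕ) < k2+1 then
        (if (p:ℕ) = (q:ℕ) then
          (2*(m:ℝ)^2*(x j * ∏ l ∈ (delt n (k2+2)).erase j, x l))
            * (2*Real.cos (m * x (φ p))^2 - 1)
         else 2*(2*(m:ℝ)^2*(x j * ∏ l ∈ (delt n (k2+2)).erase j, x l))
            * Real.cos (m * x (φ p)) * Real.cos (m * x (φ q)))
       else (2*(m:ℝ)*∏ l ∈ (delt n (k2+2)).erase j, x l) * Real.cos (m * x (φ p)))
    else (if (q:ℕ) < k2+1 then
      (2*(m:ℝ)*∏ l ∈ (delt n (k2+2)).erase j, x l) * Real.cos (m * x (φ q))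
      else 0)) with hNM
  have hBN : (Matrix.of fun p q : Fin (k2+2) => pd2 (φ p) (φ q) v x)
      = Matrix.diagonal rv * NM * Matrix.diagonal rv := by
    ext p q
    rw [Matrix.mul_diagonal, Matrix.diagonal_mul, Matrix.of_apply]
    by_cases hp : (p:ℕ) < k2+1
    · by_cases hq : (q:ℕ) < k2+1
      · by_cases hpq : (p:ℕ) = (q:ℕ)
        · have hpq' : p = q := Fin.ext hpq
          subst hpq'
          have hav : ((φ p) : ℕ) < k2+1 := by rw [hφvlt p hp]; exact hp
          rw [key_diag (φ p), hsplit, fγ1 (φ p), fδ1 (φ p) hav, hQ, hg2γ (φ p) hav,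
            Finset.prod_pow]
          simp only [hrv, hNM, Matrix.of_apply, if_pos hp, eq_self_iff_true, if_true]
          have pyth := Real.sin_sq_add_cos_sq (m * x (φ p))
          linear_combination (-(2*(m:ℝ)^2*(x j * ∏ l ∈ (delt n (k2+2)).erase j, x l))
            * (∏ l ∈ (gam n (k2+2)).erase (φ p), Real.sin (m * x l))^2) * pyth
        · have hap : ((φ p):ℕ) = (p:ℕ) := hφvlt p hp
          have haq : ((φ q):ℕ) = (q:ℕ) := hφvlt q hq
          have hav : ((φ p):ℕ) < k2+1 := by omega
          have hbv : ((φ q):ℕ) < k2+1 := by omega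
          have hne : φ p ≠ φ q := by
            intro h; apply hpq; rw [← hap, ← haq, h]
          rw [key_off (φ p) (φ q) hne, hsplit, fγ2 (φ p) (φ q), fδ2 (φ q) (φ p) hbv hav,
            hQ, hg1γ (φ p) hav, hg1γ (φ q) hbv, Finset.prod_pow]
          have hqmem : φ q ∈ (gam n (k2+2)).erase (φ p) :=
            Finset.mem_erase.2 ⟨Ne.symm hne, (memγ _).2 hbv⟩
          have hpmem : φ p ∈ (gam n (k2+2)).erase (φ q) :=
            Finset.mem_erase.2 ⟨hne, (memγ _).2 hav⟩
          have hd1 : ∏ l ∈ (gam n (k2+2)).erase (φ p), Real.sin (m*x l)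
              = Real.sin (m * x (φ q))
                * ∏ l ∈ ((gam n (k2+2)).erase (φ p)).erase (φ q), Real.sin (m*x l) :=
            (Finset.mul_prod_erase _ _ hqmem).symm
          have hd2 : ∏ l ∈ (gam n (k2+2)).erase (φ q), Real.sin (m*x l)
              = Real.sin (m * x (φ p))
                * ∏ l ∈ ((gam n (k2+2)).erase (φ p)).erase (φ q), Real.sin (m*x l) := by
            rw [← Finset.mul_prod_erase _ _ hpmem, erase_erase_comm]
          simp only [hrv, hNM, Matrix.of_apply, if_pos hp, if_pos hq, if_neg hpq]
          rw [hd1, hd2]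
          ring
      · have hap : ((φ p):ℕ) = (p:ℕ) := hφvlt p hp
        have hav : ((φ p):ℕ) < k2+1 := by omega
        have hφqj : φ q = j := hφge q hq
        have hnej : φ p ≠ j := by
          intro h; rw [h] at hap; omega
        rw [hφqj, key_off (φ p) j hnej, hsplit, fγ3 (φ p) hav, fδ3 (φ p) hav,
          hg1γ (φ p) hav, hg1j, Finset.prod_pow]
        simp only [hrv, hNM, Matrix.of_apply, if_pos hp, if_neg hq]
        have hpγ : φ p ∈ gam n (k2+2) := (memγ _).2 hav
        rw [(Finset.mul_prod_erase _ _ hpγ).symm]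
        ring
    · by_cases hq : (q:ℕ) < k2+1
      · have haq : ((φ q):ℕ) = (q:ℕ) := hφvlt q hq
        have hbv : ((φ q):ℕ) < k2+1 := by omega
        have hφpj : φ p = j := hφge p hp
        have hnej : j ≠ φ q := by
          intro h; rw [← h] at haq; omega
        rw [hφpj, key_off j (φ q) hnej, erase_erase_comm, hsplit, fγ3 (φ q) hbv,
          fδ3 (φ q) hbv, hg1γ (φ q) hbv, hg1j, Finset.prod_pow]
        simp only [hrv, hNM, Matrix.of_apply, if_neg hp, if_pos hq]
        have hqγ : φ q ∈ gam n (k2+2) := (memγ _).2 hbv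
        rw [(Finset.mul_prod_erase _ _ hqγ).symm]
        ring
      · rw [hφge p hp, hφge q hq, key_diag j, hg2j, zero_mul]
        simp only [hrv, hNM, Matrix.of_apply, if_neg hp, if_neg hq, mul_zero, zero_mul]
  have hdetB : (Matrix.of fun p q : Fin (k2+2) => pd2 (φ p) (φ q) v x).det
      = (∏ p, rv p)^2 * NM.det := by
    rw [hBN, Matrix.det_mul, Matrix.det_mul, Matrix.det_diagonal]
    ring
  -- the product of the diagonal entries
  have hone : (univ : Finset (Fin (k2+2))).filter (fun p : Fin (k2+2) => ¬ ((p:ℕ) < k2+1))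
      = {(⟨k2+1, by omega⟩ : Fin (k2+2))} := by
    ext p
    simp only [Finset.mem_filter, Finset.mem_univ, true_and, Finset.mem_singleton,
      Fin.ext_iff, not_lt]
    have := p.isLt
    constructor
    · intro h; omega
    · intro h; omega
  have hprodrv : ∏ p, rv p = (∏ l ∈ gam n (k2+2), Real.sin (m * x l))^(k2+1) := by
    have hrv' : ∀ p : Fin (k2+2), rv p
        = if (p:ℕ) < k2+1 then ∏ l ∈ (gam n (k2+2)).erase (φ p), Real.sin (m * x l)
          else ∏ l ∈ gam n (k2+2), Real.sin (m * x l) := fun p => by rw [hrv]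
    rw [Finset.prod_congr rfl (fun p _ => hrv' p), Finset.prod_ite, hone,
      Finset.prod_singleton]
    have hb : ∏ p ∈ (univ : Finset (Fin (k2+2))).filter (fun p : Fin (k2+2) => (p:ℕ) < k2+1),
        (∏ l ∈ (gam n (k2+2)).erase (φ p), Real.sin (m * x l))
        = ∏ i ∈ gam n (k2+2), ∏ l ∈ (gam n (k2+2)).erase i, Real.sin (m * x l) := by
      apply Finset.prod_nbij (i := φ)
      · intro p hp
        simp only [Finset.mem_filter, Finset.mem_univ, true_and] at hp
        exact (memγ _).2 (by rw [hφvlt p hp]; exact hp)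
      · intro a _ b _ hab; exact hφinj hab
      · intro i hi
        have hiv : (i:ℕ) < k2+1 := (memγ i).1 (Finset.mem_coe.1 hi)
        refine ⟨⟨(i:ℕ), by omega⟩, ?_, ?_⟩
        · exact Finset.mem_coe.2 (Finset.mem_filter.2 ⟨Finset.mem_univ _, hiv⟩)
        · exact Fin.ext (by rw [hφvlt _ hiv])
      · intro p _; rfl
    rw [hb, double_erase_prod, hcardγ]
    rw [show k2 + 1 - 1 = k2 from rfl, ← pow_succ]
  -- the determinant of NM
  set emb : Fin (k2+1) → Fin n := fun q => (⟨(q:ℕ), by omega⟩ : Fin n) with hemb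
  have hdetNM : NM.det
      = (-1:ℝ)^(k2+1)
        * (2*(m:ℝ)^2*(x j * ∏ l ∈ (delt n (k2+2)).erase j, x l))^k2
        * (2*(m:ℝ)*(∏ l ∈ (delt n (k2+2)).erase j, x l))^2
        * ∑ q : Fin (k2+1), Real.cos (m * x (emb q))^2 := by
    set e : Fin (k2+1) ⊕ Fin 1 ≃ Fin (k2+2) :=
      finSumFinEquiv.trans (finCongr (by omega : k2+1+1 = k2+2)) with he
    have heL : ∀ p : Fin (k2+1), ((e (Sum.inl p)) : ℕ) = (p:ℕ) := by
      intro p; rw [he]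
      simp [Equiv.trans_apply, finSumFinEquiv_apply_left]
    have heR : ∀ q : Fin 1, ((e (Sum.inr q)) : ℕ) = k2+1 := by
      intro q
      have hq0 : (q:ℕ) = 0 := by omega
      rw [he]
      simp [Equiv.trans_apply, finSumFinEquiv_apply_right, hq0]
    have hφeL : ∀ p : Fin (k2+1), φ (e (Sum.inl p)) = emb p := by
      intro p
      have h1 : ((e (Sum.inl p)):ℕ) < k2+1 := by rw [heL]; exact p.isLt
      apply Fin.ext
      rw [hφvlt _ h1, heL, hemb]
    have hφeR : ∀ q : Fin 1, φ (e (Sum.inr q)) = j := fun q => hφge _ (by rw [heR]; omega)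
    set AL := 2*(m:ℝ)^2*(x j * ∏ l ∈ (delt n (k2+2)).erase j, x l) with hAL
    set BE := 2*(m:ℝ)*(∏ l ∈ (delt n (k2+2)).erase j, x l) with hBE
    set Ab : Matrix (Fin (k2+1)) (Fin (k2+1)) ℝ := Matrix.of (fun p q =>
      if (p:ℕ) = (q:ℕ) then AL * (2*Real.cos (m * x (emb p))^2 - 1)
      else 2*AL*Real.cos (m * x (emb p)) * Real.cos (m * x (emb q))) with hAb
    set Bb : Matrix (Fin (k2+1)) (Fin 1) ℝ :=
      Matrix.of (fun p _ => BE * Real.cos (m * x (emb p))) with hBb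
    set Cb : Matrix (Fin 1) (Fin (k2+1)) ℝ :=
      Matrix.of (fun _ q => BE * Real.cos (m * x (emb q))) with hCb
    have hsub : NM.submatrix e e = Matrix.fromBlocks Ab Bb Cb 0 := by
      ext pp qq
      cases pp with
      | inl p =>
        cases qq with
        | inl q =>
          rw [Matrix.submatrix_apply, Matrix.fromBlocks_apply₁₁]
          simp only [hNM, hAb, Matrix.of_apply, hφeL, hAL]
          rw [if_pos (show ((e (Sum.inl p)):ℕ) < k2+1 by rw [heL]; exact p.isLt),
            if_pos (show ((e (Sum.inl q)):ℕ) < k2+1 by rw [heL]; exact q.isLt)]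
          simp only [heL]
        | inr q =>
          rw [Matrix.submatrix_apply, Matrix.fromBlocks_apply₁₂]
          simp only [hNM, hBb, Matrix.of_apply, hφeL, hAL, hBE]
          rw [if_pos (show ((e (Sum.inl p)):ℕ) < k2+1 by rw [heL]; exact p.isLt),
            if_neg (show ¬ ((e (Sum.inr q)):ℕ) < k2+1 by rw [heR]; omega)]
      | inr p =>
        cases qq with
        | inl q =>
          rw [Matrix.submatrix_apply, Matrix.fromBlocks_apply₂₁]
          simp only [hNM, hCb, Matrix.of_apply, hφeL, hAL, hBE]
          rw [if_neg (show ¬ ((e (Sum.inr p)):ℕ) < k2+1 by rw [heR]; omega),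
            if_pos (show ((e (Sum.inl q)):ℕ) < k2+1 by rw [heL]; exact q.isLt)]
        | inr q =>
          rw [Matrix.submatrix_apply, Matrix.fromBlocks_apply₂₂]
          simp only [hNM, Matrix.of_apply]
          rw [if_neg (show ¬ ((e (Sum.inr p)):ℕ) < k2+1 by rw [heR]; omega),
            if_neg (show ¬ ((e (Sum.inr q)):ℕ) < k2+1 by rw [heR]; omega)]
          simp
    rw [← Matrix.det_submatrix_equiv_self e NM, hsub]
    set U : Matrix (Fin (k2+1)) (Fin 1) ℝ :=
      Matrix.of (fun p _ => 2*(m:ℝ)*(x j)*Real.cos (m * x (emb p))) with hU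
    have hfact1 : Matrix.fromBlocks Ab Bb Cb (0 : Matrix (Fin 1) (Fin 1) ℝ)
        = Matrix.fromBlocks 1 U 0 1
          * Matrix.fromBlocks ((-AL) • (1 : Matrix (Fin (k2+1)) (Fin (k2+1)) ℝ)) Bb Cb 0 := by
      rw [Matrix.fromBlocks_multiply, Matrix.fromBlocks_inj]
      refine ⟨?_, ?_, ?_, ?_⟩
      · rw [Matrix.one_mul]
        ext p q
        simp only [Matrix.add_apply, Matrix.smul_apply, Matrix.one_apply, Matrix.mul_apply,
          Fin.sum_univ_one, hAb, hU, hCb, Matrix.of_apply, smul_eq_mul]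
        by_cases hpq : p = q
        · subst hpq
          rw [if_pos rfl, if_pos rfl, hAL, hBE]
          ring
        · rw [if_neg (fun h => hpq (Fin.ext h)), if_neg hpq, hAL, hBE]
          ring
      · rw [Matrix.one_mul, Matrix.mul_zero, add_zero]
      · rw [Matrix.zero_mul, Matrix.one_mul, zero_add]
      · rw [Matrix.zero_mul, Matrix.one_mul, zero_add]
    rw [hfact1, Matrix.det_mul, Matrix.det_fromBlocks_zero₂₁, Matrix.det_one, Matrix.det_one,
      mul_one, one_mul]
    have hk2pos : k2 ≠ 0 := by omega
    by_cases hALz : AL = 0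
    · rw [hALz, neg_zero, zero_smul, zero_pow hk2pos]
      rw [mul_zero, zero_mul, zero_mul]
      by_cases hc0 : BE * Real.cos (m * x (emb ⟨0, by omega⟩)) = 0
      · apply Matrix.det_eq_zero_of_row_eq_zero (Sum.inl (⟨0, by omega⟩ : Fin (k2+1)))
        rintro (q|q)
        · simp [Matrix.fromBlocks_apply₁₁]
        · rw [Matrix.fromBlocks_apply₁₂]
          simp only [hBb, Matrix.of_apply]
          exact hc0
      · have hk21 : (1:ℕ) < k2+1 := by omega
        set M0 := Matrix.fromBlocks (0 : Matrix (Fin (k2+1)) (Fin (k2+1)) ℝ) Bb Cb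
          (0 : Matrix (Fin 1) (Fin 1) ℝ) with hM0
        have hii : (Sum.inl (⟨0, by omega⟩ : Fin (k2+1)) : Fin (k2+1) ⊕ Fin 1)
            ≠ Sum.inl (⟨1, hk21⟩ : Fin (k2+1)) := by
          simp [Fin.ext_iff]
        have hup : M0 = M0.updateRow (Sum.inl ⟨1, hk21⟩)
            ((BE * Real.cos (m * x (emb ⟨1, hk21⟩))
              / (BE * Real.cos (m * x (emb ⟨0, by omega⟩))))
              • M0 (Sum.inl ⟨0, by omega⟩)) := by
          ext ii qq
          rw [Matrix.updateRow_apply]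
          by_cases hii2 : ii = Sum.inl ⟨1, hk21⟩
          · rw [if_pos hii2, hii2]
            cases qq with
            | inl q =>
              simp [hM0, Matrix.fromBlocks_apply₁₁]
            | inr q =>
              simp only [hM0, Matrix.fromBlocks_apply₁₂, hBb, Matrix.of_apply,
                Pi.smul_apply, smul_eq_mul]
              rw [div_mul_cancel₀ _ hc0]
          · rw [if_neg hii2]
        conv_lhs => rw [hup]
        rw [Matrix.det_updateRow_smul]
        rw [Matrix.det_zero_of_row_eq hii ?_, mul_zero]
        rw [Matrix.updateRow_ne hii, Matrix.updateRow_self]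
    · have hfact2 : Matrix.fromBlocks ((-AL) • (1:Matrix (Fin (k2+1)) (Fin (k2+1)) ℝ)) Bb Cb
          (0:Matrix (Fin 1) (Fin 1) ℝ)
          = Matrix.fromBlocks 1 0
              (Matrix.of fun (_ : Fin 1) (q : Fin (k2+1)) =>
                (-(1:ℝ)/AL) * (BE * Real.cos (m * x (emb q)))) 1
            * Matrix.fromBlocks ((-AL) • 1) Bb 0
              (Matrix.of fun _ _ : Fin 1 =>
                (BE^2 * ∑ q : Fin (k2+1), Real.cos (m * x (emb q))^2)/AL) := by
        rw [Matrix.fromBlocks_multiply, Matrix.fromBlocks_inj]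
        refine ⟨?_, ?_, ?_, ?_⟩
        · rw [Matrix.one_mul, Matrix.zero_mul, add_zero]
        · rw [Matrix.one_mul, Matrix.zero_mul, add_zero]
        · rw [Matrix.mul_smul, Matrix.mul_one, Matrix.mul_zero, add_zero]
          ext p q
          simp only [hCb, Matrix.of_apply, Matrix.smul_apply, smul_eq_mul]
          field_simp
        · rw [Matrix.one_mul]
          ext p q
          rw [Matrix.add_apply, Matrix.mul_apply]
          simp only [Matrix.of_apply, Matrix.zero_apply, hBb]
          have hterm : ∀ r : Fin (k2+1),
              (-(1:ℝ)/AL) * (BE * Real.cos (m * x (emb r))) * (BE * Real.cos (m * x (emb r)))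
              = (-(BE^2/AL)) * Real.cos (m * x (emb r))^2 := by
            intro r; ring
          rw [Finset.sum_congr rfl fun r _ => hterm r, ← Finset.mul_sum]
          field_simp
          ring
      rw [hfact2, Matrix.det_mul, Matrix.det_fromBlocks_zero₁₂, Matrix.det_one, Matrix.det_one,
        mul_one, one_mul, Matrix.det_fromBlocks_zero₂₁, Matrix.det_smul, Matrix.det_one,
        Matrix.det_fin_one]
      simp only [Matrix.of_apply, mul_one, Fintype.card_fin]
      rw [neg_pow, pow_succ]
      field_simp
      ring
  have hsum : ∑ i ∈ gam n (k2+2), Real.cos (m * x i)^2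
      = ∑ q : Fin (k2+1), Real.cos (m * x (emb q))^2 := by
    refine (Finset.sum_nbij (i := emb) ?_ ?_ ?_ ?_).symm
    · intro q _
      refine (memγ _).2 ?_
      simp only [hemb]
      exact q.isLt
    · intro a _ b _ hab
      have hval : (a:ℕ) = (b:ℕ) := by
        have h2 := congrArg (fun z : Fin n => (z:ℕ)) hab
        simpa [hemb] using h2
      exact Fin.ext hval
    · intro i hi
      have hiv : (i:ℕ) < k2+1 := (memγ i).1 (Finset.mem_coe.1 hi)
      refine ⟨⟨(i:ℕ), hiv⟩, Finset.mem_coe.2 (Finset.mem_univ _), ?_⟩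
      apply Fin.ext
      simp [hemb]
    · intro q _; rfl
  rw [hminor, hdetB, hprodrv, hdetNM, hsum]
  rw [show 2*(k2+2)-2 = 2*k2+2 by omega, show k2+2-1 = k2+1 by omega,
    show k2+2-2 = k2 by omega, Finset.prod_pow]
  ring

end
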